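/- The closure function for sequence graphs F⇒(Σ) = gfp(F̂_Σ) is idempotent: F⇒(F⇒(Σ)) = F⇒(Σ) for every sequence graph Σ. -/

import Mathlib

inductive V : Type
  | zero | one | X | T
deriving DecidableEq

instance instFintypeV : Fintype V :=
  ⟨{V.zero, V.one, V.X, V.T}, fun x => by cases x <;> simp⟩

def vleB : V → V → Bool := fun a b =>
  a = b || a = V.X || b = V.T

def vlub : V → V → V
  | V.X, b => b
  | a, V.X => a
  | a, b => if a = b then a else V.T

def vglb : V → V → V
  | V.T, b => b
  | a, V.T => a
  | a, b => if a = b then a else V.X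

instance : LE V := ⟨fun a b => vleB a b = true⟩
instance : DecidableRel (α := V) (· ≤ ·) := fun a b => inferInstanceAs (Decidable (vleB a b = true))

instance : Lattice V where
  le := (· ≤ ·)
  le_refl := by decide
  le_trans := by decide
  le_antisymm := by decide
  sup := vlub
  le_sup_left := by decide
  le_sup_right := by decide
  sup_le := by decide
  inf := vglb
  inf_le_left := by decide
  inf_le_right := by decide
  le_inf := by decide

instance : BoundedOrder V where
  top := V.T
  le_top := by decide
  bot := V.X
  bot_le := by decide

def vand : V → V → V
  | V.T, _ => V.T
  | _, V.T => V.T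
  | V.zero, _ => V.zero
  | _, V.zero => V.zero
  | V.one, V.one => V.one
  | _, _ => V.X

def vor : V → V → V
  | V.T, _ => V.T
  | _, V.T => V.T
  | V.one, _ => V.one
  | _, V.one => V.one
  | V.zero, V.zero => V.zero
  | _, _ => V.X

def vnot : V → V
  | V.zero => V.one
  | V.one => V.zero
  | V.X => V.X
  | V.T => V.T


/-- `nextf regIn s` propagates register inputs to register outputs:
a register output `n` with register input `n'` receives `s n'`; all other
nodes receive X. -/
def nextf {Node : Type} (regIn : Node → Option Node) (s : Node → V) : Node → V :=
  fun n => (regIn n).elim V.X s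

/-- The closure function for sequences induced by a closure function `F`:
`F→(σ)(0) = F(σ(0))`, `F→(σ)(t+1) = F(σ(t+1) ⊔ next(F→(σ)(t)))`. -/
def Fseq {Node : Type} (F : (Node → V) → (Node → V)) (regIn : Node → Option Node)
    (σ : ℕ → Node → V) : ℕ → Node → V
  | 0 => F (σ 0)
  | t + 1 => F (σ (t + 1) ⊔ nextf regIn (Fseq F regIn σ t))

/-- The one-step function `F̂_Σ` on sequence graphs of a fixed finite shape:
`F̂_Σ(Δ)(e) = F(Σ(e))` for initial edges `e`, and
`F̂_Σ(Δ)(e) = F(Σ(e) ⊔ ⨅_{i ∈ in(e)} next(Δ(i)))` otherwise. -/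
def Fhat {Node E : Type} [DecidableEq E]
    (F : (Node → V) → (Node → V)) (regIn : Node → Option Node)
    (initial : E → Bool) (ine : E → Finset E)
    (Sg : E → Node → V) (Δ : E → Node → V) : E → Node → V :=
  fun e =>
    if initial e then F (Sg e)
    else F (Sg e ⊔ (ine e).inf fun i => nextf regIn (Δ i))

/-- `x` is the greatest fixpoint of `f`. -/
def IsGfp {α : Type*} [Preorder α] (f : α → α) (x : α) : Prop :=
  f x = x ∧ ∀ y, f y = y → y ≤ x

/-- The closure function for sequence graphs `F⇒(Σ) = gfp(F̂_Σ)` is idempotent: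
F⇒(F⇒(Σ)) = F⇒(Σ). -/
theorem Fsg_idempotent {Node E : Type} [DecidableEq E] [Fintype E]
    (F : (Node → V) → (Node → V)) (regIn : Node → Option Node)
    (initial : E → Bool) (ine : E → Finset E)
    (hmono : ∀ s t : Node → V, s ≤ t → F s ≤ F t)
    (hidem : ∀ s : Node → V, F (F s) = F s)
    (hext : ∀ s : Node → V, s ≤ F s)
    (Sg Δ Δ' : E → Node → V)
    (hgfp : IsGfp (Fhat F regIn initial ine Sg) Δ)
    (hgfp' : IsGfp (Fhat F regIn initial ine Δ) Δ') :
    Δ' = Δ := by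
  -- closure lemma: F (F x ⊔ b) = F (x ⊔ b)
  have hclos : ∀ x b : Node → V, F (F x ⊔ b) = F (x ⊔ b) := by
    intro x b
    apply le_antisymm
    · have h1 : F x ⊔ b ≤ F (x ⊔ b) :=
        sup_le (hmono _ _ le_sup_left) (le_trans le_sup_right (hext _))
      calc F (F x ⊔ b) ≤ F (F (x ⊔ b)) := hmono _ _ h1
        _ = F (x ⊔ b) := hidem _
    · exact hmono _ _ (sup_le_sup_right (hext x) b)
  have hnext : ∀ s t : Node → V, s ≤ t → nextf regIn s ≤ nextf regIn t := by
    intro s t h n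
    unfold nextf
    cases regIn n with
    | none => exact le_refl _
    | some m => exact h m
  -- Δ is a fixpoint of Fhat F regIn initial ine Δ
  have hfixΔ : Fhat F regIn initial ine Δ Δ = Δ := by
    funext e
    unfold Fhat
    split
    · -- initial case: Δ e = F (Sg e), so F (Δ e) = Δ e
      have he : Δ e = F (Sg e) := by
        conv_lhs => rw [← hgfp.1]
        unfold Fhat
        simp [*]
      rw [he, hidem]
    · rename_i hne
      have he : Δ e = F (Sg e ⊔ (ine e).inf fun i => nextf regIn (Δ i)) := by
        conv_lhs => rw [← hgfp.1]
        unfold Fhat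
        simp [hne]
      have hA : ((ine e).inf fun i => nextf regIn (Δ i)) ≤ Δ e := by
        rw [he]
        exact le_trans le_sup_right (hext _)
      have : Δ e ⊔ ((ine e).inf fun i => nextf regIn (Δ i)) = Δ e := sup_eq_left.mpr hA
      rw [this, he, hidem, ← he]
  have hΔle : Δ ≤ Δ' := hgfp'.2 Δ hfixΔ
  -- Δ' is a fixpoint of Fhat F regIn initial ine Sg
  have hfixΔ' : Fhat F regIn initial ine Sg Δ' = Δ' := by
    funext e
    unfold Fhat
    split
    · rename_i hi
      have he : Δ' e = F (Δ e) := by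
        conv_lhs => rw [← hgfp'.1]
        unfold Fhat
        simp [hi]
      have heΔ : Δ e = F (Sg e) := by
        conv_lhs => rw [← hgfp.1]
        unfold Fhat
        simp [hi]
      rw [he, heΔ, hidem]
    · rename_i hne
      have he : Δ' e = F (Δ e ⊔ (ine e).inf fun i => nextf regIn (Δ' i)) := by
        conv_lhs => rw [← hgfp'.1]
        unfold Fhat
        simp [hne]
      have heΔ : Δ e = F (Sg e ⊔ (ine e).inf fun i => nextf regIn (Δ i)) := by
        conv_lhs => rw [← hgfp.1]
        unfold Fhat
        simp [hne]
      set A := (ine e).inf fun i => nextf regIn (Δ i) with hA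
      set B := (ine e).inf fun i => nextf regIn (Δ' i) with hB
      have hAB : A ≤ B := by
        apply Finset.le_inf
        intro i hi
        exact le_trans (Finset.inf_le hi) (hnext _ _ (fun n => hΔle i n))
      have : Sg e ⊔ A ⊔ B = Sg e ⊔ B := by
        rw [sup_assoc, sup_of_le_right hAB]
      rw [he, heΔ, hclos, this]
  have hΔ'le : Δ' ≤ Δ := hgfp.2 Δ' hfixΔ'
  exact le_antisymm hΔ'le hΔle
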